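/- (Semidefinite reformulation by fictitious loads.) Let K₁,…,K_m be symmetric positive semidefinite real n×n matrices, let {1,…,m} = 𝒟₁ ∪ 𝒟₂ with 𝒟₁ ∩ 𝒟₂ = ∅, let N₁, N₂ ⊆ {1,…,n} with N₁ ∪ N₂ = {1,…,n} be such that K_i is supported on N_k for every i ∈ 𝒟_k (k = 1,2), and let f⁽¹⁾, f⁽²⁾ ∈ ℝⁿ be supported on N₁ and N₂ respectively, with f = f⁽¹⁾ + f⁽²⁾. Let x ∈ ℝ^m with x_i ≥ 0 for all i, and γ ∈ ℝ. Then the block matrix [Σ_{i=1}^m x_i K_i, f; fᵀ, γ] is positive semidefinite if and only if there exist γ₁, γ₂ ∈ ℝ with γ₁ + γ₂ = γ and a vector g ∈ ℝⁿ supported on N₁ ∩ N₂ such that both block matrices [Σ_{i∈𝒟₁} x_i K_i, f⁽¹⁾ + g; (f⁽¹⁾ + g)ᵀ, γ₁] and [Σ_{i∈𝒟₂} x_i K_i, f⁽²⁾ − g; (f⁽²⁾ − g)ᵀ, γ₂] are positive semidefinite. -/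

import Mathlib

open Matrix

/-- An `n×n` matrix is supported on `I` if `Y i j = 0` whenever `i ∉ I` or `j ∉ I`. -/
def MatSupportedOn {n : ℕ} (Y : Matrix (Fin n) (Fin n) ℝ) (I : Finset (Fin n)) : Prop :=
  ∀ i j, (i ∉ I ∨ j ∉ I) → Y i j = 0

/-- A vector is supported on `I` if `v i = 0` for every `i ∉ I`. -/
def VecSupportedOn {n : ℕ} (v : Fin n → ℝ) (I : Finset (Fin n)) : Prop :=
  ∀ i, i ∉ I → v i = 0

/-- The symmetric `(n+1)×(n+1)` block matrix `[K, b; bᵀ, c]`. -/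
def ArrowMat {n : ℕ} (K : Matrix (Fin n) (Fin n) ℝ) (b : Fin n → ℝ) (c : ℝ) :
    Matrix (Fin n ⊕ Unit) (Fin n ⊕ Unit) ℝ :=
  Matrix.fromBlocks K (Matrix.of fun i (_ : Unit) => b i)
    (Matrix.of fun (_ : Unit) j => b j) (Matrix.of fun (_ _ : Unit) => c)


lemma symm_bilin {n : ℕ} {A : Matrix (Fin n) (Fin n) ℝ} (hA : A.IsSymm) (u v : Fin n → ℝ) :
    u ⬝ᵥ A *ᵥ v = v ⬝ᵥ A *ᵥ u := by
  rw [dotProduct_mulVec, ← Matrix.mulVec_transpose, hA, dotProduct_comm]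

lemma arrow_quadform {n : ℕ} (K : Matrix (Fin n) (Fin n) ℝ) (b : Fin n → ℝ) (c : ℝ)
    (v : Fin n → ℝ) (t : ℝ) :
    (Sum.elim v (fun _ => t)) ⬝ᵥ (ArrowMat K b c *ᵥ Sum.elim v (fun _ => t)) =
      v ⬝ᵥ K *ᵥ v + 2 * t * (b ⬝ᵥ v) + c * t ^ 2 := by
  rw [ArrowMat, fromBlocks_mulVec, Sum.elim_comp_inl, Sum.elim_comp_inr,
    sumElim_dotProduct_sumElim]
  simp [mulVec, dotProduct, mul_add, add_mul, Finset.sum_add_distrib, Finset.mul_sum]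
  have h : (∑ x : Fin n, v x * (b x * t)) = ∑ i : Fin n, t * (b i * v i) :=
    Finset.sum_congr rfl fun i _ => by ring
  have h2 : (∑ i : Fin n, t * (b i * v i)) + (∑ i : Fin n, t * (b i * v i)) =
      ∑ i : Fin n, 2 * t * (b i * v i) := by
    rw [← Finset.sum_add_distrib]; exact Finset.sum_congr rfl fun i _ => by ring
  linear_combination h + h2

lemma arrow_psd_iff {n : ℕ} {K : Matrix (Fin n) (Fin n) ℝ} (hK : K.IsSymm) (b : Fin n → ℝ)
    (c : ℝ) : (ArrowMat K b c).PosSemidef ↔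
      ∀ (v : Fin n → ℝ) (t : ℝ), 0 ≤ v ⬝ᵥ K *ᵥ v + 2 * t * (b ⬝ᵥ v) + c * t ^ 2 := by
  constructor
  · intro h v t
    have := h.dotProduct_mulVec_nonneg (Sum.elim v (fun _ => t))
    rwa [show star (Sum.elim v fun _ => t) = Sum.elim v fun _ => t from rfl,
      arrow_quadform] at this
  · intro h
    refine Matrix.PosSemidef.of_dotProduct_mulVec_nonneg ?_ ?_
    · ext i j
      match i, j with
      | Sum.inl i, Sum.inl j =>
        simp [ArrowMat, Matrix.fromBlocks, Matrix.conjTranspose_apply, ← Matrix.IsSymm.apply hK]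
      | Sum.inl i, Sum.inr j => simp [ArrowMat, Matrix.fromBlocks, Matrix.conjTranspose_apply]
      | Sum.inr i, Sum.inl j => simp [ArrowMat, Matrix.fromBlocks, Matrix.conjTranspose_apply]
      | Sum.inr i, Sum.inr j => simp [ArrowMat, Matrix.fromBlocks, Matrix.conjTranspose_apply]
    · intro y
      have key := h (fun i => y (Sum.inl i)) (y (Sum.inr ()))
      rw [← arrow_quadform K b c] at key
      have hy : Sum.elim (fun i => y (Sum.inl i)) (fun _ : Unit => y (Sum.inr ())) = y := by
        funext i
        match i with
        | Sum.inl i => rfl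
        | Sum.inr () => rfl
      rw [hy] at key
      exact key

lemma psd_exists_mulVec {n : ℕ} {A : Matrix (Fin n) (Fin n) ℝ} (hA : A.PosSemidef)
    (f : Fin n → ℝ) (hf : ∀ v : Fin n → ℝ, A *ᵥ v = 0 → f ⬝ᵥ v = 0) :
    ∃ u : Fin n → ℝ, A *ᵥ u = f := by
  set T := Matrix.toEuclideanLin A with hT
  set R := LinearMap.range T with hR
  set f' : EuclideanSpace ℝ (Fin n) := (WithLp.equiv 2 (Fin n → ℝ)).symm f with hf'
  have hmem : f' ∈ Rᗮᗮ := by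
    rw [Submodule.mem_orthogonal]
    intro u hu
    have h1 : T u ∈ R := LinearMap.mem_range_self T u
    have h2 : (inner ℝ (T u) u : ℝ) = 0 :=
      (Submodule.mem_orthogonal R u).mp hu (T u) h1
    have h3 : A *ᵥ (WithLp.equiv 2 (Fin n → ℝ) u) = 0 := by
      have : star (WithLp.equiv 2 (Fin n → ℝ) u) ⬝ᵥ A *ᵥ (WithLp.equiv 2 (Fin n → ℝ) u) = 0 := by
        rw [show star (WithLp.equiv 2 (Fin n → ℝ) u) = WithLp.equiv 2 (Fin n → ℝ) u from rfl]
        rw [← h2]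
        simp only [PiLp.inner_apply, RCLike.inner_apply, starRingEnd_apply]
        rw [dotProduct_comm]
        simp [dotProduct, Matrix.toEuclideanLin_apply, hT]
        exact Finset.sum_congr rfl fun i _ => mul_comm _ _
      exact (hA.dotProduct_mulVec_zero_iff _).mp this
    have h4 := hf _ h3
    simp only [PiLp.inner_apply, RCLike.inner_apply, starRingEnd_apply]
    rw [← h4, dotProduct]
    simp only [star_trivial]
    exact Finset.sum_congr rfl fun i _ => rfl
  rw [Submodule.orthogonal_orthogonal] at hmem
  obtain ⟨u, hu⟩ := hmem
  refine ⟨WithLp.equiv 2 (Fin n → ℝ) u, ?_⟩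
  have := congrArg (WithLp.equiv 2 (Fin n → ℝ)) hu
  exact this

lemma psd_zero {n : ℕ} : (0 : Matrix (Fin n) (Fin n) ℝ).PosSemidef :=
  ⟨by simp [Matrix.IsHermitian], fun y => by simp⟩

lemma psd_smul {n : ℕ} {A : Matrix (Fin n) (Fin n) ℝ} (hA : A.PosSemidef) {c : ℝ} (hc : 0 ≤ c) :
    (c • A).PosSemidef := by
  refine Matrix.PosSemidef.of_dotProduct_mulVec_nonneg ?_ fun y => ?_
  · unfold Matrix.IsHermitian
    rw [Matrix.conjTranspose_smul, hA.1]
    simp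
  · rw [Matrix.smul_mulVec, dotProduct_smul, smul_eq_mul]
    exact mul_nonneg hc (hA.dotProduct_mulVec_nonneg y)

lemma psd_sum {n m : ℕ} (s : Finset (Fin m)) (K : Fin m → Matrix (Fin n) (Fin n) ℝ)
    (x : Fin m → ℝ) (hx : ∀ i, 0 ≤ x i) (hK : ∀ i, (K i).PosSemidef) :
    (∑ i ∈ s, x i • K i).PosSemidef := by
  classical
  induction s using Finset.induction_on with
  | empty => simpa using psd_zero
  | insert a s hnot ih =>
    rw [Finset.sum_insert hnot]
    exact Matrix.PosSemidef.add (psd_smul (hK _) (hx _)) ih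

lemma isSymm_sum {n m : ℕ} (s : Finset (Fin m)) (K : Fin m → Matrix (Fin n) (Fin n) ℝ)
    (x : Fin m → ℝ) (hKsymm : ∀ i, (K i).IsSymm) : (∑ i ∈ s, x i • K i).IsSymm := by
  unfold Matrix.IsSymm
  rw [Matrix.transpose_sum]
  exact Finset.sum_congr rfl fun i _ => by rw [Matrix.transpose_smul, hKsymm i]

lemma psd_shift {n : ℕ} {A : Matrix (Fin n) (Fin n) ℝ} (hA : A.PosSemidef) (hAs : A.IsSymm)
    (u v : Fin n → ℝ) (t : ℝ) :
    0 ≤ v ⬝ᵥ A *ᵥ v + 2 * t * ((A *ᵥ u) ⬝ᵥ v) + (u ⬝ᵥ A *ᵥ u) * t ^ 2 := by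
  have h := hA.dotProduct_mulVec_nonneg (v + t • u)
  rw [show star (v + t • u) = v + t • u from rfl] at h
  rw [mulVec_add, mulVec_smul, dotProduct_add, add_dotProduct, add_dotProduct,
    dotProduct_smul, smul_dotProduct, smul_dotProduct, dotProduct_smul,
    smul_eq_mul, smul_eq_mul, smul_eq_mul, smul_eq_mul] at h
  have hsymm : u ⬝ᵥ A *ᵥ v = v ⬝ᵥ A *ᵥ u := symm_bilin hAs u v
  have hcomm : (A *ᵥ u) ⬝ᵥ v = v ⬝ᵥ A *ᵥ u := dotProduct_comm _ _
  rw [hsymm] at h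
  rw [hcomm]
  nlinarith [h]
/-- Semidefinite reformulation by fictitious loads. -/
theorem stmt10 (n m : ℕ) (K : Fin m → Matrix (Fin n) (Fin n) ℝ)
    (hKsymm : ∀ i, (K i).IsSymm) (hKpsd : ∀ i, (K i).PosSemidef)
    (D₁ D₂ : Finset (Fin m)) (hD : D₁ ∪ D₂ = Finset.univ) (hDdisj : D₁ ∩ D₂ = ∅)
    (N₁ N₂ : Finset (Fin n)) (hN : N₁ ∪ N₂ = Finset.univ)
    (hK₁ : ∀ i ∈ D₁, MatSupportedOn (K i) N₁)
    (hK₂ : ∀ i ∈ D₂, MatSupportedOn (K i) N₂)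
    (f₁ f₂ : Fin n → ℝ)
    (hf₁ : VecSupportedOn f₁ N₁) (hf₂ : VecSupportedOn f₂ N₂)
    (x : Fin m → ℝ) (hx : ∀ i, 0 ≤ x i) (γ : ℝ) :
    (ArrowMat (∑ i, x i • K i) (f₁ + f₂) γ).PosSemidef ↔
      ∃ γ₁ γ₂ : ℝ, γ₁ + γ₂ = γ ∧
        ∃ g : Fin n → ℝ, VecSupportedOn g (N₁ ∩ N₂) ∧
          (ArrowMat (∑ i ∈ D₁, x i • K i) (f₁ + g) γ₁).PosSemidef ∧
          (ArrowMat (∑ i ∈ D₂, x i • K i) (f₂ - g) γ₂).PosSemidef := by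
  classical
  set A₁ := ∑ i ∈ D₁, x i • K i with hA₁def
  set A₂ := ∑ i ∈ D₂, x i • K i with hA₂def
  have hdisj : Disjoint D₁ D₂ := Finset.disjoint_iff_inter_eq_empty.mpr hDdisj
  have hsum : A₁ + A₂ = ∑ i, x i • K i := by
    rw [hA₁def, hA₂def, ← Finset.sum_union hdisj, hD]
  have hA₁s : A₁.IsSymm := isSymm_sum _ _ _ hKsymm
  have hA₂s : A₂.IsSymm := isSymm_sum _ _ _ hKsymm
  have hAs : (∑ i, x i • K i).IsSymm := isSymm_sum _ _ _ hKsymm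
  have hA₁p : A₁.PosSemidef := psd_sum _ _ _ hx hKpsd
  have hA₂p : A₂.PosSemidef := psd_sum _ _ _ hx hKpsd
  have hA₁supp : ∀ i j, i ∉ N₁ ∨ j ∉ N₁ → A₁ i j = 0 := by
    intro i j hij
    rw [hA₁def, Matrix.sum_apply]
    refine Finset.sum_eq_zero fun k hk => ?_
    rw [Matrix.smul_apply, hK₁ k hk i j hij, smul_zero]
  have hA₂supp : ∀ i j, i ∉ N₂ ∨ j ∉ N₂ → A₂ i j = 0 := by
    intro i j hij
    rw [hA₂def, Matrix.sum_apply]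
    refine Finset.sum_eq_zero fun k hk => ?_
    rw [Matrix.smul_apply, hK₂ k hk i j hij, smul_zero]
  constructor
  · intro h
    have hq := (arrow_psd_iff hAs (f₁ + f₂) γ).mp h
    have hker : ∀ v, (∑ i, x i • K i) *ᵥ v = 0 → (f₁ + f₂) ⬝ᵥ v = 0 := by
      intro v hv
      have h0 : v ⬝ᵥ (∑ i, x i • K i) *ᵥ v = 0 := by rw [hv, dotProduct_zero]
      set a := (f₁ + f₂) ⬝ᵥ v with ha
      have hq' : ∀ t : ℝ, 0 ≤ 2 * t * a + γ * t ^ 2 := by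
        intro t; have := hq v t; rw [h0] at this; linarith
      have hγ : 0 ≤ γ := by have := hq' 1; have := hq' (-1); nlinarith
      rcases eq_or_lt_of_le hγ with hγ0 | hγ0
      · have h1 := hq' 1
        have h2 := hq' (-1)
        rw [← hγ0] at h1 h2
        nlinarith
      · have h3 := hq' (-(a / γ))
        have h4 : γ * (a / γ) = a := mul_div_cancel₀ a (ne_of_gt hγ0)
        have hsq : a ^ 2 ≤ 0 := by nlinarith [sq_nonneg (a / γ)]
        have : a ^ 2 = 0 := le_antisymm hsq (sq_nonneg a)
        exact pow_eq_zero_iff (by norm_num) |>.mp this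
    obtain ⟨u, hu⟩ := psd_exists_mulVec (psd_sum Finset.univ K x hx hKpsd) (f₁ + f₂) hker
    set g := A₁ *ᵥ u - f₁ with hg
    have hadd : A₁ *ᵥ u + A₂ *ᵥ u = f₁ + f₂ := by rw [← add_mulVec, hsum, hu]
    have hg2 : g = f₂ - A₂ *ᵥ u := by
      funext i
      have := congrFun hadd i
      simp only [Pi.add_apply] at this
      simp only [hg, Pi.sub_apply, Pi.add_apply]
      linarith
    have hfg₁ : f₁ + g = A₁ *ᵥ u := by rw [hg]; abel
    have hfg₂ : f₂ - g = A₂ *ᵥ u := by rw [hg2]; abel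
    refine ⟨u ⬝ᵥ A₁ *ᵥ u, γ - u ⬝ᵥ A₁ *ᵥ u, by ring, g, ?_, ?_, ?_⟩
    · intro i hi
      rw [Finset.mem_inter] at hi
      by_cases hi1 : i ∈ N₁
      · have hi2 : i ∉ N₂ := fun h2 => hi ⟨hi1, h2⟩
        rw [hg2]
        have hAu : (A₂ *ᵥ u) i = 0 := by
          rw [mulVec, dotProduct]
          exact Finset.sum_eq_zero fun j _ => by rw [hA₂supp i j (Or.inl hi2), zero_mul]
        simp [Pi.sub_apply, hAu, hf₂ i hi2]
      · rw [hg]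
        have hAu : (A₁ *ᵥ u) i = 0 := by
          rw [mulVec, dotProduct]
          exact Finset.sum_eq_zero fun j _ => by rw [hA₁supp i j (Or.inl hi1), zero_mul]
        simp [Pi.sub_apply, hAu, hf₁ i hi1]
    · rw [arrow_psd_iff hA₁s]
      intro v t
      rw [hfg₁]
      exact psd_shift hA₁p hA₁s u v t
    · rw [arrow_psd_iff hA₂s]
      intro v t
      rw [hfg₂]
      have hbase := psd_shift hA₂p hA₂s u v t
      have hfu : (f₁ + f₂) ⬝ᵥ u = u ⬝ᵥ (∑ i, x i • K i) *ᵥ u := by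
        rw [← hu, dotProduct_comm]
      have hγu : u ⬝ᵥ (∑ i, x i • K i) *ᵥ u ≤ γ := by
        have hq1 := hq u (-1)
        rw [hfu] at hq1
        nlinarith [hq1]
      have hsplit : u ⬝ᵥ (∑ i, x i • K i) *ᵥ u = u ⬝ᵥ A₁ *ᵥ u + u ⬝ᵥ A₂ *ᵥ u := by
        rw [← hsum, add_mulVec, dotProduct_add]
      have hnn : 0 ≤ (γ - u ⬝ᵥ A₁ *ᵥ u - u ⬝ᵥ A₂ *ᵥ u) * t ^ 2 :=
        mul_nonneg (by linarith) (sq_nonneg t)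
      nlinarith [hbase, hnn]
  · rintro ⟨γ₁, γ₂, hγ, g, hgsupp, h1, h2⟩
    have hM : ArrowMat (∑ i, x i • K i) (f₁ + f₂) γ =
        ArrowMat A₁ (f₁ + g) γ₁ + ArrowMat A₂ (f₂ - g) γ₂ := by
      ext i j
      match i, j with
      | Sum.inl i, Sum.inl j =>
        simp only [ArrowMat, Matrix.fromBlocks_apply₁₁, Matrix.add_apply, ← hsum]
      | Sum.inl i, Sum.inr j =>
        simp only [ArrowMat, Matrix.fromBlocks_apply₁₂, Matrix.add_apply, Matrix.of_apply,
          Pi.add_apply, Pi.sub_apply]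
        ring
      | Sum.inr i, Sum.inl j =>
        simp only [ArrowMat, Matrix.fromBlocks_apply₂₁, Matrix.add_apply, Matrix.of_apply,
          Pi.add_apply, Pi.sub_apply]
        ring
      | Sum.inr i, Sum.inr j =>
        simp only [ArrowMat, Matrix.fromBlocks_apply₂₂, Matrix.add_apply, Matrix.of_apply]
        exact hγ.symm
    rw [hM]
    exact h1.add h2
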